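/- If E is a right Hilbert A-module whose identity operator is compact (id_E ∈ K(E)), then E is finitely generated projective: E is a direct summand of a finite direct sum of representable modules ⊕_{i=1}^n h_{x_i}. Conversely, if A is unital, every finitely generated projective module has compact identity. -/

import Mathlib

universe u u' v v'

open Filter Topology

/-- A (possibly non-unital) C*-category structure on a family of hom-spaces:
a category enriched in complex Banach spaces, with contractive composition and a
conjugate-linear involution satisfying the C*-identity and positivity of elements
of the form `a* ∘ a` (encoded via self-adjoint square roots). -/
class CStarCategory {Obj : Type u} (Hom : Obj → Obj → Type v)
    [∀ x y, NormedAddCommGroup (Hom x y)] [∀ x y, NormedSpace ℂ (Hom x y)]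
    [∀ x y, CompleteSpace (Hom x y)] : Type (max u v) where
  comp : ∀ {x y z : Obj}, Hom y z → Hom x y → Hom x z
  adj : ∀ {x y : Obj}, Hom x y → Hom y x
  comp_assoc : ∀ {w x y z : Obj} (f : Hom y z) (g : Hom x y) (h : Hom w x),
      comp (comp f g) h = comp f (comp g h)
  comp_add_left : ∀ {x y z : Obj} (f f' : Hom y z) (g : Hom x y),
      comp (f + f') g = comp f g + comp f' g
  comp_add_right : ∀ {x y z : Obj} (f : Hom y z) (g g' : Hom x y),
      comp f (g + g') = comp f g + comp f g'
  comp_smul_left : ∀ {x y z : Obj} (c : ℂ) (f : Hom y z) (g : Hom x y),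
      comp (c • f) g = c • comp f g
  comp_smul_right : ∀ {x y z : Obj} (c : ℂ) (f : Hom y z) (g : Hom x y),
      comp f (c • g) = c • comp f g
  norm_comp_le : ∀ {x y z : Obj} (f : Hom y z) (g : Hom x y), ‖comp f g‖ ≤ ‖f‖ * ‖g‖
  adj_adj : ∀ {x y : Obj} (f : Hom x y), adj (adj f) = f
  adj_add : ∀ {x y : Obj} (f g : Hom x y), adj (f + g) = adj f + adj g
  adj_smul : ∀ {x y : Obj} (c : ℂ) (f : Hom x y), adj (c • f) = (starRingEnd ℂ) c • adj f
  adj_comp : ∀ {x y z : Obj} (f : Hom y z) (g : Hom x y), adj (comp f g) = comp (adj g) (adj f)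
  norm_adj_comp_self : ∀ {x y : Obj} (a : Hom x y), ‖comp (adj a) a‖ = ‖a‖ * ‖a‖
  pos_adj_comp_self : ∀ {x y : Obj} (a : Hom x y),
      ∃ b : Hom x x, adj b = b ∧ comp (adj a) a = comp b b

infixl:70 " ⊛ " => CStarCategory.comp
postfix:max "†" => CStarCategory.adj

section CStarBasics

variable {Obj : Type u} {Hom : Obj → Obj → Type v}
  [∀ x y, NormedAddCommGroup (Hom x y)] [∀ x y, NormedSpace ℂ (Hom x y)]
  [∀ x y, CompleteSpace (Hom x y)] [CStarCategory Hom]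

/-- Positivity of an endomorphism in a C*-category: it is of the form `b* ∘ b`. -/
def IsPos {x : Obj} (s : Hom x x) : Prop :=
  ∃ (z : Obj) (b : Hom x z), s = (b†) ⊛ b

/-- An approximate unit for the C*-algebra `Hom x x`: a directed net of positive,
norm-bounded, increasing elements with `‖e_i ∘ c - c‖ → 0` for every `c`. -/
structure IsApproxUnit {ι : Type u'} [Preorder ι] {x : Obj} (e : ι → Hom x x) : Prop where
  nonempty : Nonempty ι
  directed : ∀ i j : ι, ∃ k, i ≤ k ∧ j ≤ k
  norm_le_one : ∀ i, ‖e i‖ ≤ 1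
  pos : ∀ i, IsPos (e i)
  mono : ∀ i j, i ≤ j → IsPos (e j - e i)
  tendsto : ∀ c : Hom x x, Tendsto (fun i => ‖(e i ⊛ c) - c‖) atTop (nhds 0)

end CStarBasics

/-- Unitality, as a property of a C*-category. -/
def IsUnitalCStarCat {Obj : Type u} (Hom : Obj → Obj → Type v)
    [∀ x y, NormedAddCommGroup (Hom x y)] [∀ x y, NormedSpace ℂ (Hom x y)]
    [∀ x y, CompleteSpace (Hom x y)] [CStarCategory Hom] : Prop :=
  ∀ x : Obj, ∃ e : Hom x x,
    (∀ {y : Obj} (a : Hom y x), e ⊛ a = a) ∧ (∀ {y : Obj} (b : Hom x y), b ⊛ e = b)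

/-- A right Hilbert module over a C*-category: a ℂ-linear functor into vector spaces
equipped with `Hom`-valued inner products; each fiber is a Banach space whose norm is
induced by the inner product. -/
structure HilbMod {Obj : Type u} (Hom : Obj → Obj → Type v)
    [∀ x y, NormedAddCommGroup (Hom x y)] [∀ x y, NormedSpace ℂ (Hom x y)]
    [∀ x y, CompleteSpace (Hom x y)] [CStarCategory Hom] : Type (max u (v + 1)) where
  carrier : Obj → Type v
  [nacg : ∀ x, NormedAddCommGroup (carrier x)]
  [nsp : ∀ x, NormedSpace ℂ (carrier x)]
  [cs : ∀ x, CompleteSpace (carrier x)]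
  smulA : ∀ {x w : Obj}, carrier x → Hom w x → carrier w
  inner : ∀ {y z : Obj}, carrier z → carrier y → Hom y z
  smulA_add_left : ∀ {x w : Obj} (e e' : carrier x) (a : Hom w x),
      smulA (e + e') a = smulA e a + smulA e' a
  smulA_add_right : ∀ {x w : Obj} (e : carrier x) (a a' : Hom w x),
      smulA e (a + a') = smulA e a + smulA e a'
  smulA_smul_left : ∀ {x w : Obj} (c : ℂ) (e : carrier x) (a : Hom w x),
      smulA (c • e) a = c • smulA e a
  smulA_smul_right : ∀ {x w : Obj} (c : ℂ) (e : carrier x) (a : Hom w x),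
      smulA e (c • a) = c • smulA e a
  smulA_comp : ∀ {x w v : Obj} (e : carrier x) (a : Hom w x) (b : Hom v w),
      smulA (smulA e a) b = smulA e (a ⊛ b)
  inner_add_left : ∀ {y z : Obj} (e e' : carrier z) (f : carrier y),
      inner (e + e') f = inner e f + inner e' f
  inner_add_right : ∀ {y z : Obj} (e : carrier z) (f f' : carrier y),
      inner e (f + f') = inner e f + inner e f'
  inner_smul_right : ∀ {y z : Obj} (c : ℂ) (e : carrier z) (f : carrier y),
      inner e (c • f) = c • inner e f
  adj_inner : ∀ {y z : Obj} (e : carrier z) (f : carrier y), (inner e f)† = inner f e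
  inner_smulA : ∀ {y z w : Obj} (e : carrier z) (f : carrier y) (a : Hom w y),
      inner e (smulA f a) = inner e f ⊛ a
  inner_self_pos : ∀ {x : Obj} (e : carrier x), ∃ (z : Obj) (b : Hom x z),
      inner e e = (b†) ⊛ b
  inner_self_eq_zero : ∀ {x : Obj} (e : carrier x), inner e e = 0 → e = 0
  norm_eq : ∀ {x : Obj} (e : carrier x), ‖e‖ = Real.sqrt ‖inner e e‖

attribute [instance] HilbMod.nacg HilbMod.nsp HilbMod.cs

section HilbModBasics

variable {Obj : Type u} {Hom : Obj → Obj → Type v}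
  [∀ x y, NormedAddCommGroup (Hom x y)] [∀ x y, NormedSpace ℂ (Hom x y)]
  [∀ x y, CompleteSpace (Hom x y)] [CStarCategory Hom]

theorem HilbMod.inner_zero_left (M : HilbMod Hom) {y z : Obj} (f : M.carrier y) :
    M.inner (0 : M.carrier z) f = 0 := by
  have h := M.inner_add_left (0 : M.carrier z) 0 f
  rw [add_zero] at h
  exact left_eq_add.mp h

theorem HilbMod.inner_zero_right (M : HilbMod Hom) {y z : Obj} (e : M.carrier z) :
    M.inner e (0 : M.carrier y) = 0 := by
  have h := M.inner_add_right e (0 : M.carrier y) 0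
  rw [add_zero] at h
  exact left_eq_add.mp h

theorem HilbMod.inner_smul_left (M : HilbMod Hom) {y z : Obj} (c : ℂ)
    (e : M.carrier z) (f : M.carrier y) :
    M.inner (c • e) f = (starRingEnd ℂ) c • M.inner e f := by
  have h : M.inner (c • e) f = (M.inner f (c • e))† := (M.adj_inner f (c • e)).symm
  rw [h, M.inner_smul_right, CStarCategory.adj_smul, M.adj_inner]

theorem HilbMod.inner_smulA_left (M : HilbMod Hom) {x y w : Obj}
    (f : M.carrier x) (a : Hom w x) (g : M.carrier y) :
    M.inner (M.smulA f a) g = (a†) ⊛ M.inner f g := by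
  have h : M.inner (M.smulA f a) g = (M.inner g (M.smulA f a))† :=
    (M.adj_inner g (M.smulA f a)).symm
  rw [h, M.inner_smulA, CStarCategory.adj_comp, M.adj_inner]

/-- A bounded adjointable operator between Hilbert modules over a C*-category,
encoded by a pair of adjoint maps. -/
structure HilbOp (M N : HilbMod Hom) : Type (max u v) where
  toFun : ∀ x, M.carrier x → N.carrier x
  adjFun : ∀ x, N.carrier x → M.carrier x
  adjoint_prop : ∀ {y z : Obj} (e : M.carrier z) (f : N.carrier y),
      N.inner (toFun z e) f = M.inner e (adjFun y f)

variable {M N P : HilbMod Hom}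

theorem HilbOp.ext' {T S : HilbOp M N} (h1 : ∀ z v, T.toFun z v = S.toFun z v)
    (h2 : ∀ z w, T.adjFun z w = S.adjFun z w) : T = S := by
  cases T with
  | mk tf af ap =>
    cases S with
    | mk tf' af' ap' =>
      have e1 : tf = tf' := funext fun z => funext fun v => h1 z v
      subst e1
      have e2 : af = af' := funext fun z => funext fun w => h2 z w
      subst e2
      rfl

/-- Composition of operators. -/
def HilbOp.comp (S : HilbOp N P) (T : HilbOp M N) : HilbOp M P where
  toFun z v := S.toFun z (T.toFun z v)
  adjFun z w := T.adjFun z (S.adjFun z w)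
  adjoint_prop e f := by rw [S.adjoint_prop, T.adjoint_prop]

/-- The identity operator. -/
def HilbOp.id (M : HilbMod Hom) : HilbOp M M where
  toFun _ v := v
  adjFun _ v := v
  adjoint_prop _ _ := rfl

/-- Adjoint (involution) of an operator. -/
def HilbOp.star (T : HilbOp M N) : HilbOp N M where
  toFun := T.adjFun
  adjFun := T.toFun
  adjoint_prop e f := by
    have h := congrArg CStarCategory.adj (T.adjoint_prop f e)
    rw [N.adj_inner, M.adj_inner] at h
    exact h.symm

instance : Zero (HilbOp M N) :=
  ⟨{ toFun := fun _ _ => 0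
     adjFun := fun _ _ => 0
     adjoint_prop := fun e f => by
       rw [HilbMod.inner_zero_left, HilbMod.inner_zero_right] }⟩

instance : Add (HilbOp M N) :=
  ⟨fun T S =>
    { toFun := fun z v => T.toFun z v + S.toFun z v
      adjFun := fun z w => T.adjFun z w + S.adjFun z w
      adjoint_prop := fun e f => by
        rw [N.inner_add_left, M.inner_add_right, T.adjoint_prop, S.adjoint_prop] }⟩

instance : SMul ℂ (HilbOp M N) :=
  ⟨fun c T =>
    { toFun := fun z v => c • T.toFun z v
      adjFun := fun z w => (starRingEnd ℂ) c • T.adjFun z w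
      adjoint_prop := fun e f => by
        rw [HilbMod.inner_smul_left, M.inner_smul_right, T.adjoint_prop] }⟩

instance : AddCommMonoid (HilbOp M N) where
  add_assoc T S R := HilbOp.ext' (fun z v => add_assoc _ _ _) (fun z w => add_assoc _ _ _)
  zero_add T := HilbOp.ext' (fun z v => zero_add _) (fun z w => zero_add _)
  add_zero T := HilbOp.ext' (fun z v => add_zero _) (fun z w => add_zero _)
  add_comm T S := HilbOp.ext' (fun z v => add_comm _ _) (fun z w => add_comm _ _)
  nsmul := nsmulRec

/-- The operator norm of an operator between Hilbert modules. -/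
noncomputable def opNorm (T : HilbOp M N) : ℝ :=
  sInf {C : ℝ | 0 ≤ C ∧ ∀ (z : Obj) (v : M.carrier z), ‖T.toFun z v‖ ≤ C * ‖v‖}

/-- The rank-one operator `θ^{f,e} : v ↦ f·⟨e,v⟩`. -/
def thetaOp {x : Obj} (f : N.carrier x) (e : M.carrier x) : HilbOp M N where
  toFun z v := N.smulA f (M.inner e v)
  adjFun z w := M.smulA e (N.inner f w)
  adjoint_prop v w := by
    rw [HilbMod.inner_smulA_left, M.adj_inner, M.inner_smulA]

/-- Compact operators: norm-limits of finite sums of rank-one operators. -/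
def IsCompactOp (T : HilbOp M N) : Prop :=
  ∀ ε : ℝ, 0 < ε → ∃ (n : ℕ) (w : Fin n → Obj) (f : ∀ i, N.carrier (w i))
    (e : ∀ i, M.carrier (w i)), ∀ (z : Obj) (v : M.carrier z),
      ‖T.toFun z v - ∑ i, N.smulA (f i) (M.inner (e i) v)‖ ≤ ε * ‖v‖

end HilbModBasics

/-- The representable right Hilbert module `h_x = Hom(-, x)`. -/
def repMod {Obj : Type u} (Hom : Obj → Obj → Type v)
    [∀ x y, NormedAddCommGroup (Hom x y)] [∀ x y, NormedSpace ℂ (Hom x y)]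
    [∀ x y, CompleteSpace (Hom x y)] [CStarCategory Hom] (x : Obj) : HilbMod Hom where
  carrier z := Hom z x
  smulA e a := e ⊛ a
  inner e f := (e†) ⊛ f
  smulA_add_left e e' a := CStarCategory.comp_add_left e e' a
  smulA_add_right e a a' := CStarCategory.comp_add_right e a a'
  smulA_smul_left c e a := CStarCategory.comp_smul_left c e a
  smulA_smul_right c e a := CStarCategory.comp_smul_right c e a
  smulA_comp e a b := CStarCategory.comp_assoc e a b
  inner_add_left e e' f := by
    show ((e + e')†) ⊛ f = ((e†) ⊛ f) + ((e'†) ⊛ f)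
    rw [CStarCategory.adj_add, CStarCategory.comp_add_left]
  inner_add_right e f f' := CStarCategory.comp_add_right _ f f'
  inner_smul_right c e f := CStarCategory.comp_smul_right c _ f
  adj_inner e f := by rw [CStarCategory.adj_comp, CStarCategory.adj_adj]
  inner_smulA e f a := (CStarCategory.comp_assoc _ f a).symm
  inner_self_pos e := ⟨x, e, rfl⟩
  inner_self_eq_zero := by
    intro z e h
    have h' : (e†) ⊛ e = 0 := h
    have h2 := CStarCategory.norm_adj_comp_self (Hom := Hom) e
    rw [h', norm_zero] at h2
    have h3 : ‖e‖ = 0 := by nlinarith [norm_nonneg e]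
    exact norm_eq_zero.mp h3
  norm_eq := by
    intro z e
    rw [CStarCategory.norm_adj_comp_self, Real.sqrt_mul_self (norm_nonneg e)]

section YonedaOps

variable {Obj : Type u} {Hom : Obj → Obj → Type v}
  [∀ x y, NormedAddCommGroup (Hom x y)] [∀ x y, NormedSpace ℂ (Hom x y)]
  [∀ x y, CompleteSpace (Hom x y)] [CStarCategory Hom]

/-- The operator `ε_m : h_x → M` sending `a` to `m·a`; its adjoint is `f ↦ ⟨m,f⟩`. -/
def epsOp {M : HilbMod Hom} {x : Obj} (m : M.carrier x) : HilbOp (repMod Hom x) M where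
  toFun z a := M.smulA m a
  adjFun z f := M.inner m f
  adjoint_prop a f := HilbMod.inner_smulA_left M m a f

/-- The Yoneda operator `h_x → h_y` given by postcomposition with `a : Hom x y`. -/
def yonedaOp {x y : Obj} (a : Hom x y) : HilbOp (repMod Hom x) (repMod Hom y) where
  toFun z b := a ⊛ b
  adjFun z c := (a†) ⊛ c
  adjoint_prop b c := by
    show ((a ⊛ b)†) ⊛ c = (b†) ⊛ ((a†) ⊛ c)
    exact (congrArg (fun t => t ⊛ c) (CStarCategory.adj_comp a b)).trans
      (CStarCategory.comp_assoc _ _ _)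

end YonedaOps

section AuxBasic

variable {Obj : Type u} {Hom : Obj → Obj → Type v}
  [∀ x y, NormedAddCommGroup (Hom x y)] [∀ x y, NormedSpace ℂ (Hom x y)]
  [∀ x y, CompleteSpace (Hom x y)] [CStarCategory Hom]

open CStarCategory

theorem CStarCategory.comp_zero {x y z : Obj} (f : Hom y z) :
    f ⊛ (0 : Hom x y) = 0 := by
  have h := comp_add_right f (0 : Hom x y) 0
  rw [add_zero] at h
  exact left_eq_add.mp h

theorem CStarCategory.zero_comp {x y z : Obj} (g : Hom x y) :
    (0 : Hom y z) ⊛ g = 0 := by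
  have h := comp_add_left (0 : Hom y z) 0 g
  rw [add_zero] at h
  exact left_eq_add.mp h

theorem CStarCategory.comp_neg {x y z : Obj} (f : Hom y z) (g : Hom x y) :
    f ⊛ (-g) = -(f ⊛ g) := by
  have h := comp_add_right f g (-g)
  rw [add_neg_cancel, comp_zero] at h
  exact eq_neg_of_add_eq_zero_left (by rw [add_comm]; exact h.symm)

theorem CStarCategory.neg_comp {x y z : Obj} (f : Hom y z) (g : Hom x y) :
    (-f) ⊛ g = -(f ⊛ g) := by
  have h := comp_add_left f (-f) g
  rw [add_neg_cancel, zero_comp] at h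
  exact eq_neg_of_add_eq_zero_left (by rw [add_comm]; exact h.symm)

theorem CStarCategory.comp_sub {x y z : Obj} (f : Hom y z) (g g' : Hom x y) :
    f ⊛ (g - g') = f ⊛ g - f ⊛ g' := by
  rw [sub_eq_add_neg, comp_add_right, comp_neg, sub_eq_add_neg]

theorem CStarCategory.sub_comp {x y z : Obj} (f f' : Hom y z) (g : Hom x y) :
    (f - f') ⊛ g = f ⊛ g - f' ⊛ g := by
  rw [sub_eq_add_neg, comp_add_left, neg_comp, sub_eq_add_neg]

theorem CStarCategory.adj_zero {x y : Obj} : ((0 : Hom x y)†) = 0 := by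
  have h := adj_add (0 : Hom x y) 0
  rw [add_zero] at h
  exact left_eq_add.mp h

theorem CStarCategory.norm_adj {x y : Obj} (a : Hom x y) : ‖a†‖ = ‖a‖ := by
  have key : ∀ {x y : Obj} (b : Hom x y), ‖b‖ ≤ ‖b†‖ := by
    intro x y b
    by_cases hb : ‖b‖ = 0
    · rw [hb]; exact norm_nonneg _
    · have h := norm_adj_comp_self b
      have h2 := norm_comp_le (b†) b
      nlinarith [norm_nonneg b, norm_nonneg (b†)]
  refine le_antisymm ?_ (key a)
  have := key (a†)
  rwa [adj_adj] at this

theorem HilbMod.inner_neg_left (M : HilbMod Hom) {y z : Obj} (e : M.carrier z)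
    (f : M.carrier y) : M.inner (-e) f = -M.inner e f := by
  have h := M.inner_add_left e (-e) f
  rw [add_neg_cancel, M.inner_zero_left] at h
  exact eq_neg_of_add_eq_zero_left (by rw [add_comm]; exact h.symm)

theorem HilbMod.inner_neg_right (M : HilbMod Hom) {y z : Obj} (e : M.carrier z)
    (f : M.carrier y) : M.inner e (-f) = -M.inner e f := by
  have h := M.inner_add_right e f (-f)
  rw [add_neg_cancel, M.inner_zero_right] at h
  exact eq_neg_of_add_eq_zero_left (by rw [add_comm]; exact h.symm)

theorem HilbMod.inner_sub_left (M : HilbMod Hom) {y z : Obj} (e e' : M.carrier z)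
    (f : M.carrier y) : M.inner (e - e') f = M.inner e f - M.inner e' f := by
  rw [sub_eq_add_neg, M.inner_add_left, M.inner_neg_left, sub_eq_add_neg]

theorem HilbMod.inner_sub_right (M : HilbMod Hom) {y z : Obj} (e : M.carrier z)
    (f f' : M.carrier y) : M.inner e (f - f') = M.inner e f - M.inner e f' := by
  rw [sub_eq_add_neg, M.inner_add_right, M.inner_neg_right, sub_eq_add_neg]

theorem HilbMod.smulA_zero (M : HilbMod Hom) {x w : Obj} (e : M.carrier x) :
    M.smulA e (0 : Hom w x) = 0 := by
  have h := M.smulA_add_right e (0 : Hom w x) 0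
  rw [add_zero] at h
  exact left_eq_add.mp h

theorem HilbMod.zero_smulA (M : HilbMod Hom) {x w : Obj} (a : Hom w x) :
    M.smulA (0 : M.carrier x) a = 0 := by
  have h := M.smulA_add_left (0 : M.carrier x) 0 a
  rw [add_zero] at h
  exact left_eq_add.mp h

/-- The norm of `⟨e,e⟩` is `‖e‖²`. -/
theorem HilbMod.norm_inner_self (M : HilbMod Hom) {x : Obj} (e : M.carrier x) :
    ‖M.inner e e‖ = ‖e‖ ^ 2 := by
  have h := M.norm_eq e
  rw [h, Real.sq_sqrt (norm_nonneg _)]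

/-- Nondegeneracy of the inner product. -/
theorem HilbMod.eq_zero_of_inner_eq_zero (M : HilbMod Hom) {x : Obj}
    (d : M.carrier x) (h : ∀ (e : M.carrier x), M.inner e d = 0) : d = 0 :=
  M.inner_self_eq_zero d (h d)

end AuxBasic


section AuxOp

variable {Obj : Type u} {Hom : Obj → Obj → Type v}
  [∀ x y, NormedAddCommGroup (Hom x y)] [∀ x y, NormedSpace ℂ (Hom x y)]
  [∀ x y, CompleteSpace (Hom x y)] [CStarCategory Hom]
  {M N : HilbMod Hom}

/-- Adjointable operators pair on the other side as well. -/
theorem HilbOp.adjoint_prop' (T : HilbOp M N) {y z : Obj} (e : N.carrier z)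
    (f : M.carrier y) : N.inner e (T.toFun y f) = M.inner (T.adjFun z e) f :=
  (T.star.adjoint_prop e f).symm

/-- Two adjointable operators with the same underlying map are equal. -/
theorem HilbOp.ext_of_toFun {T S : HilbOp M N} (h : ∀ z v, T.toFun z v = S.toFun z v) :
    T = S := by
  refine HilbOp.ext' h ?_
  intro z w
  set d := T.adjFun z w - S.adjFun z w with hd
  have hzero : ∀ (u : M.carrier z), M.inner u d = 0 := by
    intro u
    rw [hd, M.inner_sub_right, ← T.adjoint_prop, ← S.adjoint_prop, h, sub_self]
  have : d = 0 := M.eq_zero_of_inner_eq_zero d (fun e => hzero e)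
  rw [← sub_eq_zero]
  exact this

/-- Adjointable operators are additive. -/
theorem HilbOp.toFun_add (T : HilbOp M N) {z : Obj} (v v' : M.carrier z) :
    T.toFun z (v + v') = T.toFun z v + T.toFun z v' := by
  set d := T.toFun z (v + v') - (T.toFun z v + T.toFun z v') with hd
  have hzero : ∀ (u : N.carrier z), N.inner u d = 0 := by
    intro u
    rw [hd, N.inner_sub_right, N.inner_add_right, T.adjoint_prop' u,
      T.adjoint_prop' u, T.adjoint_prop' u, ← M.inner_add_right, sub_self]
  have : d = 0 := N.eq_zero_of_inner_eq_zero d (fun e => hzero e)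
  rw [← sub_eq_zero]
  exact this

/-- Adjointable operators are `A`-module maps. -/
theorem HilbOp.map_smulA (T : HilbOp M N) {x w : Obj} (m : M.carrier x) (a : Hom w x) :
    T.toFun w (M.smulA m a) = N.smulA (T.toFun x m) a := by
  set d := T.toFun w (M.smulA m a) - N.smulA (T.toFun x m) a with hd
  have hzero : ∀ (u : N.carrier w), N.inner u d = 0 := by
    intro u
    rw [hd, N.inner_sub_right, T.adjoint_prop' u, M.inner_smulA, N.inner_smulA,
      T.adjoint_prop' u, sub_self]
  have : d = 0 := N.eq_zero_of_inner_eq_zero d (fun e => hzero e)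
  rw [← sub_eq_zero]
  exact this

/-- Evaluation of operators at an object, as an additive monoid morphism. -/
def HilbOp.toFunHom (z : Obj) : HilbOp M N →+ (M.carrier z → N.carrier z) where
  toFun T := T.toFun z
  map_zero' := rfl
  map_add' T S := rfl

theorem HilbOp.sum_toFun {ι : Type*} (s : Finset ι) (T : ι → HilbOp M N)
    (z : Obj) (v : M.carrier z) :
    (∑ i ∈ s, T i).toFun z v = ∑ i ∈ s, (T i).toFun z v := by
  calc (∑ i ∈ s, T i).toFun z v = (HilbOp.toFunHom z (∑ i ∈ s, T i)) v := rfl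
    _ = (∑ i ∈ s, HilbOp.toFunHom z (T i)) v := by rw [map_sum]
    _ = ∑ i ∈ s, (T i).toFun z v := by rw [Finset.sum_apply]; rfl

end AuxOp


section AuxAlg

/-- The endomorphism algebra of an object, as a type synonym. -/
def EndAlg {Obj : Type u} (Hom : Obj → Obj → Type v)
    [∀ x y, NormedAddCommGroup (Hom x y)] [∀ x y, NormedSpace ℂ (Hom x y)]
    [∀ x y, CompleteSpace (Hom x y)] [CStarCategory Hom] (x : Obj) : Type v := Hom x x

variable {Obj : Type u} {Hom : Obj → Obj → Type v}
  [∀ x y, NormedAddCommGroup (Hom x y)] [∀ x y, NormedSpace ℂ (Hom x y)]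
  [∀ x y, CompleteSpace (Hom x y)] [CStarCategory Hom] {x : Obj}

/-- Tautological map into the endomorphism algebra. -/
def EndAlg.mk (a : Hom x x) : EndAlg Hom x := a

instance : NormedAddCommGroup (EndAlg Hom x) :=
  inferInstanceAs (NormedAddCommGroup (Hom x x))

instance : NormedSpace ℂ (EndAlg Hom x) := inferInstanceAs (NormedSpace ℂ (Hom x x))

instance : CompleteSpace (EndAlg Hom x) := inferInstanceAs (CompleteSpace (Hom x x))

noncomputable instance : NonUnitalNormedRing (EndAlg Hom x) :=
  { (inferInstanceAs (NormedAddCommGroup (EndAlg Hom x)) : NormedAddCommGroup (EndAlg Hom x)) with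
    mul := fun a b => EndAlg.mk ((a : Hom x x) ⊛ (b : Hom x x))
    left_distrib := fun a b c => CStarCategory.comp_add_right a b c
    right_distrib := fun a b c => CStarCategory.comp_add_left a b c
    zero_mul := fun a => CStarCategory.zero_comp a
    mul_zero := fun a => CStarCategory.comp_zero a
    mul_assoc := fun a b c => CStarCategory.comp_assoc a b c
    norm_mul_le := fun a b => CStarCategory.norm_comp_le a b }

noncomputable instance : StarRing (EndAlg Hom x) where
  star a := EndAlg.mk ((a : Hom x x)†)
  star_involutive a := CStarCategory.adj_adj a
  star_mul a b := CStarCategory.adj_comp a b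
  star_add a b := CStarCategory.adj_add a b

instance : CStarRing (EndAlg Hom x) where
  norm_mul_self_le a := (CStarCategory.norm_adj_comp_self (a : Hom x x)).ge

instance : IsScalarTower ℂ (EndAlg Hom x) (EndAlg Hom x) :=
  ⟨fun c a b => CStarCategory.comp_smul_left c a b⟩

instance : SMulCommClass ℂ (EndAlg Hom x) (EndAlg Hom x) :=
  ⟨fun c a b => (CStarCategory.comp_smul_right c a b).symm⟩

instance : StarModule ℂ (EndAlg Hom x) :=
  ⟨fun c a => CStarCategory.adj_smul c a⟩

noncomputable instance : NonUnitalCStarAlgebra (EndAlg Hom x) := {}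

@[simp] theorem EndAlg.mk_add (a b : Hom x x) :
    EndAlg.mk (Hom := Hom) (a + b) = EndAlg.mk a + EndAlg.mk b := rfl

@[simp] theorem EndAlg.mk_sub (a b : Hom x x) :
    EndAlg.mk (Hom := Hom) (a - b) = EndAlg.mk a - EndAlg.mk b := rfl

@[simp] theorem EndAlg.mk_comp (a b : Hom x x) :
    EndAlg.mk (Hom := Hom) (a ⊛ b) = EndAlg.mk a * EndAlg.mk b := rfl

@[simp] theorem EndAlg.mk_adj (a : Hom x x) :
    EndAlg.mk (Hom := Hom) (a†) = star (EndAlg.mk a) := rfl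

@[simp] theorem EndAlg.mk_smul (c : ℂ) (a : Hom x x) :
    EndAlg.mk (Hom := Hom) (c • a) = c • EndAlg.mk a := rfl

@[simp] theorem EndAlg.norm_mk (a : Hom x x) :
    ‖EndAlg.mk (Hom := Hom) a‖ = ‖a‖ := rfl

/-- Elements of the form `b† ⊛ b` are nonnegative in the unitization. -/
theorem inr_adj_comp_nonneg {z : Obj} (b : Hom x z) :
    0 ≤ (Unitization.inr (EndAlg.mk ((b†) ⊛ b)) : Unitization ℂ (EndAlg Hom x)) := by
  obtain ⟨c, hc, heq⟩ := CStarCategory.pos_adj_comp_self b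
  rw [heq]
  have : EndAlg.mk (Hom := Hom) (c ⊛ c) = star (EndAlg.mk c) * EndAlg.mk c := by
    rw [EndAlg.mk_comp, ← EndAlg.mk_adj, hc]
  rw [this, Unitization.inr_mul, Unitization.inr_star]
  exact star_mul_self_nonneg _

end AuxAlg


section AuxCS

variable {Obj : Type u} {Hom : Obj → Obj → Type v}
  [∀ x y, NormedAddCommGroup (Hom x y)] [∀ x y, NormedSpace ℂ (Hom x y)]
  [∀ x y, CompleteSpace (Hom x y)] [CStarCategory Hom]

/-- The canonical map from an endomorphism algebra into the unitization. -/
noncomputable def toUnit {x : Obj} (s : Hom x x) : Unitization ℂ (EndAlg Hom x) :=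
  Unitization.inr (EndAlg.mk s)

@[simp] theorem toUnit_add {x : Obj} (a b : Hom x x) :
    toUnit (a + b) = toUnit a + toUnit b := by
  simp [toUnit, Unitization.inr_add]

@[simp] theorem toUnit_sub {x : Obj} (a b : Hom x x) :
    toUnit (a - b) = toUnit a - toUnit b := by
  simp [toUnit, EndAlg.mk_sub, Unitization.inr_sub]

@[simp] theorem toUnit_comp {x : Obj} (a b : Hom x x) :
    toUnit (a ⊛ b) = toUnit a * toUnit b := by
  simp only [toUnit, EndAlg.mk_comp, Unitization.inr_mul]

@[simp] theorem toUnit_adj {x : Obj} (a : Hom x x) :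
    toUnit (a†) = star (toUnit a) := by
  simp only [toUnit, EndAlg.mk_adj, Unitization.inr_star]

@[simp] theorem toUnit_smul {x : Obj} (c : ℂ) (a : Hom x x) :
    toUnit (c • a) = c • toUnit a := by
  simp only [toUnit, EndAlg.mk_smul, Unitization.inr_smul]

@[simp] theorem toUnit_smul_real {x : Obj} (c : ℝ) (a : Hom x x) :
    toUnit (c • a) = c • toUnit a := by
  rw [← Complex.coe_smul, toUnit_smul, Complex.coe_smul]

@[simp] theorem norm_toUnit {x : Obj} (a : Hom x x) : ‖toUnit a‖ = ‖a‖ := by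
  simp only [toUnit, Unitization.norm_inr, EndAlg.norm_mk]

theorem toUnit_adj_comp_nonneg {x z : Obj} (b : Hom x z) : 0 ≤ toUnit ((b†) ⊛ b) :=
  inr_adj_comp_nonneg b

theorem toUnit_inner_self_nonneg (M : HilbMod Hom) {x : Obj} (v : M.carrier x) :
    0 ≤ toUnit (M.inner v v) := by
  obtain ⟨z, b, hb⟩ := M.inner_self_pos v
  rw [hb]
  exact toUnit_adj_comp_nonneg b

theorem real_smul_nonneg' {B : Type v'} [Ring B] [StarRing B] [PartialOrder B]
    [StarOrderedRing B] [Module ℝ B] [StarModule ℝ B] [IsScalarTower ℝ B B]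
    [SMulCommClass ℝ B B] {a : B} (ha : 0 ≤ a) {r : ℝ} (hr : 0 ≤ r) : 0 ≤ r • a := by
  have h := star_left_conjugate_nonneg ha (Real.sqrt r • (1 : B))
  have hs : star (Real.sqrt r • (1 : B)) = Real.sqrt r • (1 : B) := by
    rw [star_smul, star_one, star_trivial]
  rw [hs, smul_mul_assoc, one_mul, smul_mul_assoc, mul_smul_comm, mul_one, smul_smul,
    Real.mul_self_sqrt hr] at h
  exact h

theorem real_smul_le_smul' {B : Type v'} [Ring B] [StarRing B] [PartialOrder B]
    [StarOrderedRing B] [Module ℝ B] [StarModule ℝ B] [IsScalarTower ℝ B B]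
    [SMulCommClass ℝ B B] {a b : B} (hab : a ≤ b) {r : ℝ} (hr : 0 ≤ r) :
    r • a ≤ r • b := by
  have h := real_smul_nonneg' (sub_nonneg.2 hab) hr
  rw [smul_sub] at h
  exact sub_nonneg.1 h

/-- Cauchy–Schwarz for a Hilbert module over a C*-category (same fiber). -/
theorem HilbMod.norm_inner_le_same (M : HilbMod Hom) {x : Obj} (e f : M.carrier x) :
    ‖M.inner e f‖ ≤ ‖e‖ * ‖f‖ := by
  by_cases he : e = 0
  · subst he
    rw [M.inner_zero_left, norm_zero]
    positivity
  · have hepos : (0:ℝ) < ‖e‖ := norm_pos_iff.mpr he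
    have hKpos : (0:ℝ) < ‖e‖ ^ 2 := by positivity
    set K : ℝ := ‖e‖ ^ 2 with hK
    set t : ℝ := K⁻¹ with ht
    have htpos : 0 < t := inv_pos.mpr hKpos
    have hb0 : M.inner f e = (M.inner e f)† := (M.adj_inner e f).symm
    have h0 : 0 ≤ toUnit (M.inner (M.smulA e ((t:ℂ) • M.inner e f) - f)
        (M.smulA e ((t:ℂ) • M.inner e f) - f)) := toUnit_inner_self_nonneg M _
    have hsplit : toUnit (M.inner (M.smulA e ((t:ℂ) • M.inner e f) - f)
        (M.smulA e ((t:ℂ) • M.inner e f) - f)) =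
        (t * t) • (star (toUnit (M.inner e f)) * toUnit (M.inner e e) * toUnit (M.inner e f))
          - t • (star (toUnit (M.inner e f)) * toUnit (M.inner e f))
          - (t • (star (toUnit (M.inner e f)) * toUnit (M.inner e f))
              - toUnit (M.inner f f)) := by
      simp only [M.inner_sub_left, M.inner_sub_right, M.inner_smulA_left, M.inner_smulA,
        CStarCategory.adj_smul, Complex.conj_ofReal, CStarCategory.comp_smul_left,
        CStarCategory.comp_smul_right, hb0]
      simp only [toUnit_sub, toUnit_smul, toUnit_smul_real, toUnit_comp, toUnit_adj,
        Complex.coe_smul]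
      rw [smul_smul, ← mul_assoc]
    set cB : Unitization ℂ (EndAlg Hom x) := toUnit (M.inner e f) with hcB
    set P : Unitization ℂ (EndAlg Hom x) := toUnit (M.inner e e) with hP
    set Q : Unitization ℂ (EndAlg Hom x) := toUnit (M.inner f f) with hQ
    rw [hsplit] at h0
    have hPsa : IsSelfAdjoint P := by
      show star P = P
      rw [hP, ← toUnit_adj, M.adj_inner]
    have hPnorm : ‖P‖ = K := by
      rw [hP, norm_toUnit, M.norm_inner_self]
    have hconj : star cB * P * cB ≤ K • (star cB * cB) := by
      have := CStarAlgebra.star_left_conjugate_le_norm_smul (a := cB) (b := P) hPsa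
      rwa [hPnorm] at this
    have hCpos : 0 ≤ star cB * cB := star_mul_self_nonneg cB
    have key : star cB * cB ≤ K • Q := by
      have h1 : (t * t) • (star cB * P * cB) ≤ (t * t) • (K • (star cB * cB)) :=
        real_smul_le_smul' hconj (by positivity)
      have h2 : (t * t) • (K • (star cB * cB)) = t • (star cB * cB) := by
        rw [smul_smul, mul_assoc, inv_mul_cancel₀ hKpos.ne', mul_one]
      have h3 : 0 ≤ Q - t • (star cB * cB) := by
        calc (0 : Unitization ℂ (EndAlg Hom x)) ≤ _ := h0
          _ ≤ (t * t) • (K • (star cB * cB)) - t • (star cB * cB)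
              - (t • (star cB * cB) - Q) :=
            sub_le_sub_right (sub_le_sub_right h1 (t • (star cB * cB)))
              (t • (star cB * cB) - Q)
          _ = Q - t • (star cB * cB) := by rw [h2]; abel
      have h4 : 0 ≤ K • (Q - t • (star cB * cB)) := real_smul_nonneg' h3 hKpos.le
      rw [smul_sub, smul_smul, mul_inv_cancel₀ hKpos.ne', one_smul] at h4
      exact sub_nonneg.1 h4
    have hnorm : ‖star cB * cB‖ ≤ ‖K • Q‖ :=
      CStarAlgebra.norm_le_norm_of_nonneg_of_le hCpos key
    have hQnorm : ‖Q‖ = ‖f‖ ^ 2 := by rw [hQ, norm_toUnit, M.norm_inner_self]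
    have hcs : ‖M.inner e f‖ * ‖M.inner e f‖ ≤ K * ‖f‖ ^ 2 := by
      have h5 : ‖star cB * cB‖ = ‖M.inner e f‖ * ‖M.inner e f‖ := by
        rw [CStarRing.norm_star_mul_self, hcB, norm_toUnit]
      have h6 : ‖K • Q‖ = K * ‖f‖ ^ 2 := by
        rw [norm_smul, Real.norm_of_nonneg hKpos.le, hQnorm]
      rw [h5, h6] at hnorm
      exact hnorm
    have h7 : ‖M.inner e f‖ ^ 2 ≤ (‖e‖ * ‖f‖) ^ 2 := by
      rw [mul_pow]
      nlinarith [hcs]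
    calc ‖M.inner e f‖ = Real.sqrt (‖M.inner e f‖ ^ 2) :=
          (Real.sqrt_sq (norm_nonneg _)).symm
      _ ≤ Real.sqrt ((‖e‖ * ‖f‖) ^ 2) := Real.sqrt_le_sqrt h7
      _ = ‖e‖ * ‖f‖ := Real.sqrt_sq (by positivity)

end AuxCS


section AuxNorm

variable {Obj : Type u} {Hom : Obj → Obj → Type v}
  [∀ x y, NormedAddCommGroup (Hom x y)] [∀ x y, NormedSpace ℂ (Hom x y)]
  [∀ x y, CompleteSpace (Hom x y)] [CStarCategory Hom]

theorem HilbMod.norm_smulA_le (M : HilbMod Hom) {x w : Obj} (e : M.carrier x)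
    (a : Hom w x) : ‖M.smulA e a‖ ≤ ‖e‖ * ‖a‖ := by
  have h2 : M.inner (M.smulA e a) (M.smulA e a) = (a†) ⊛ (M.inner e e ⊛ a) := by
    rw [M.inner_smulA_left, M.inner_smulA]
  have h3 : ‖M.smulA e a‖ ^ 2 ≤ (‖e‖ * ‖a‖) ^ 2 := by
    calc ‖M.smulA e a‖ ^ 2 = ‖M.inner (M.smulA e a) (M.smulA e a)‖ :=
          (M.norm_inner_self _).symm
      _ = ‖(a†) ⊛ (M.inner e e ⊛ a)‖ := by rw [h2]
      _ ≤ ‖a†‖ * ‖M.inner e e ⊛ a‖ := CStarCategory.norm_comp_le _ _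
      _ ≤ ‖a†‖ * (‖M.inner e e‖ * ‖a‖) := by
          have := CStarCategory.norm_comp_le (M.inner e e) a
          have h4 : (0:ℝ) ≤ ‖a†‖ := norm_nonneg _
          nlinarith
      _ = (‖e‖ * ‖a‖) ^ 2 := by
          rw [CStarCategory.norm_adj, M.norm_inner_self]; ring
  calc ‖M.smulA e a‖ = Real.sqrt (‖M.smulA e a‖ ^ 2) := (Real.sqrt_sq (norm_nonneg _)).symm
    _ ≤ Real.sqrt ((‖e‖ * ‖a‖) ^ 2) := Real.sqrt_le_sqrt h3
    _ = ‖e‖ * ‖a‖ := Real.sqrt_sq (by positivity)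

/-- Cauchy–Schwarz, general version. -/
theorem HilbMod.norm_inner_le (M : HilbMod Hom) {y z : Obj} (e : M.carrier z)
    (f : M.carrier y) : ‖M.inner e f‖ ≤ ‖e‖ * ‖f‖ := by
  by_cases hn : ‖M.inner e f‖ = 0
  · rw [hn]; positivity
  · have hnpos : 0 < ‖M.inner e f‖ := lt_of_le_of_ne (norm_nonneg _) (Ne.symm hn)
    have h1 : ‖M.inner e f‖ * ‖M.inner e f‖ = ‖((M.inner e f)†) ⊛ M.inner e f‖ :=
      (CStarCategory.norm_adj_comp_self _).symm
    have h2 : ((M.inner e f)†) ⊛ M.inner e f = M.inner f (M.smulA e (M.inner e f)) := by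
      rw [M.adj_inner, ← M.inner_smulA]
    have h3 : ‖M.inner f (M.smulA e (M.inner e f))‖ ≤ ‖f‖ * (‖e‖ * ‖M.inner e f‖) := by
      calc ‖M.inner f (M.smulA e (M.inner e f))‖
          ≤ ‖f‖ * ‖M.smulA e (M.inner e f)‖ := M.norm_inner_le_same f _
        _ ≤ ‖f‖ * (‖e‖ * ‖M.inner e f‖) := by
            have := M.norm_smulA_le e (M.inner e f)
            have h4 : (0:ℝ) ≤ ‖f‖ := norm_nonneg _
            nlinarith
    rw [h2] at h1
    nlinarith

/-- A bound on an operator gives the same bound on its adjoint. -/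
theorem HilbOp.adjFun_bound {M N : HilbMod Hom} (T : HilbOp M N) {C : ℝ}
    (hC : 0 ≤ C) (h : ∀ (z : Obj) (v : M.carrier z), ‖T.toFun z v‖ ≤ C * ‖v‖) :
    ∀ (z : Obj) (w : N.carrier z), ‖T.adjFun z w‖ ≤ C * ‖w‖ := by
  intro z w
  by_cases hn : ‖T.adjFun z w‖ = 0
  · rw [hn]; positivity
  · have hnpos : 0 < ‖T.adjFun z w‖ := lt_of_le_of_ne (norm_nonneg _) (Ne.symm hn)
    have h1 : ‖T.adjFun z w‖ ^ 2 = ‖M.inner (T.adjFun z w) (T.adjFun z w)‖ :=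
      (M.norm_inner_self _).symm
    have h2 : M.inner (T.adjFun z w) (T.adjFun z w) =
        N.inner (T.toFun z (T.adjFun z w)) w := (T.adjoint_prop _ _).symm
    have h3 : ‖N.inner (T.toFun z (T.adjFun z w)) w‖ ≤ (C * ‖T.adjFun z w‖) * ‖w‖ := by
      calc ‖N.inner (T.toFun z (T.adjFun z w)) w‖
          ≤ ‖T.toFun z (T.adjFun z w)‖ * ‖w‖ := N.norm_inner_le _ _
        _ ≤ (C * ‖T.adjFun z w‖) * ‖w‖ := by
            have := h z (T.adjFun z w)
            have h4 : (0:ℝ) ≤ ‖w‖ := norm_nonneg _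
            nlinarith
    rw [h2] at h1
    nlinarith

end AuxNorm


section AuxPow

variable {Obj : Type u} {Hom : Obj → Obj → Type v}
  [∀ x y, NormedAddCommGroup (Hom x y)] [∀ x y, NormedSpace ℂ (Hom x y)]
  [∀ x y, CompleteSpace (Hom x y)] [CStarCategory Hom]

/-- Iterates of an operator. -/
def HilbOp.pow {M : HilbMod Hom} (D : HilbOp M M) : ℕ → HilbOp M M
  | 0 => HilbOp.id M
  | (k+1) => D.comp (D.pow k)

end AuxPow


/-- If a right Hilbert `A`-module `E` has compact identity operator,
then `E` is finitely generated projective, i.e. a direct summand (equivalently, a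
retract) of a finite direct sum of representable modules `⊕_{i=1}^n h_{x_i}`, the
retraction being given componentwise by operators `U_i : E → h_{x_i}`,
`V_i : h_{x_i} → E` with `∑ V_i ∘ U_i = id_E`.  Conversely, if `A` is unital, every
finitely generated projective module has compact identity. -/
theorem compact_id_iff_fgp {Obj : Type u} {Hom : Obj → Obj → Type v}
    [∀ x y, NormedAddCommGroup (Hom x y)] [∀ x y, NormedSpace ℂ (Hom x y)]
    [∀ x y, CompleteSpace (Hom x y)] [CStarCategory Hom]
    (E : HilbMod Hom) :
    (IsCompactOp (HilbOp.id E) →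
      ∃ (n : ℕ) (x : Fin n → Obj) (U : ∀ i, HilbOp E (repMod Hom (x i)))
        (V : ∀ i, HilbOp (repMod Hom (x i)) E),
        (∑ i, (V i).comp (U i)) = HilbOp.id E) ∧
    (IsUnitalCStarCat Hom →
      (∃ (n : ℕ) (x : Fin n → Obj) (U : ∀ i, HilbOp E (repMod Hom (x i)))
        (V : ∀ i, HilbOp (repMod Hom (x i)) E),
        (∑ i, (V i).comp (U i)) = HilbOp.id E) →
      IsCompactOp (HilbOp.id E)) := by
  constructor
  · -- forward: compact identity implies finitely generated projective
    intro hcpt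
    obtain ⟨n, w, f, e, happrox⟩ := hcpt (1/2) (by norm_num)
    set T : HilbOp E E := ∑ i, thetaOp (f i) (e i) with hT
    have hTfun : ∀ (z : Obj) (v : E.carrier z),
        T.toFun z v = ∑ i, E.smulA (f i) (E.inner (e i) v) := by
      intro z v
      rw [hT, HilbOp.sum_toFun]
      rfl
    set D : HilbOp E E := HilbOp.id E + (-1:ℂ) • T with hD
    have hDfun : ∀ (z : Obj) (v : E.carrier z), D.toFun z v = v - T.toFun z v := by
      intro z v
      show v + (-1:ℂ) • T.toFun z v = v - T.toFun z v
      rw [neg_one_smul, sub_eq_add_neg]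
    have hDbound : ∀ (z : Obj) (v : E.carrier z), ‖D.toFun z v‖ ≤ (1/2) * ‖v‖ := by
      intro z v
      rw [hDfun, hTfun]
      exact happrox z v
    have hDadj : ∀ (z : Obj) (w' : E.carrier z), ‖D.adjFun z w'‖ ≤ (1/2) * ‖w'‖ :=
      D.adjFun_bound (by norm_num) hDbound
    have hpowfun : ∀ (k : ℕ) (z : Obj) (v : E.carrier z),
        ‖(D.pow k).toFun z v‖ ≤ (1/2)^k * ‖v‖ := by
      intro k
      induction k with
      | zero => intro z v; simp [HilbOp.pow, HilbOp.id]
      | succ k ih =>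
        intro z v
        show ‖D.toFun z ((D.pow k).toFun z v)‖ ≤ _
        calc ‖D.toFun z ((D.pow k).toFun z v)‖
            ≤ (1/2) * ‖(D.pow k).toFun z v‖ := hDbound _ _
          _ ≤ (1/2) * ((1/2)^k * ‖v‖) := by
              have := ih z v; nlinarith
          _ = (1/2)^(k+1) * ‖v‖ := by ring
    have hpowadj : ∀ (k : ℕ) (z : Obj) (w' : E.carrier z),
        ‖(D.pow k).adjFun z w'‖ ≤ (1/2)^k * ‖w'‖ := by
      intro k
      induction k with
      | zero => intro z w'; simp [HilbOp.pow, HilbOp.id]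
      | succ k ih =>
        intro z w'
        show ‖(D.pow k).adjFun z (D.adjFun z w')‖ ≤ _
        calc ‖(D.pow k).adjFun z (D.adjFun z w')‖
            ≤ (1/2)^k * ‖D.adjFun z w'‖ := ih _ _
          _ ≤ (1/2)^k * ((1/2) * ‖w'‖) := by
              have := hDadj z w'
              have h5 : (0:ℝ) ≤ (1/2:ℝ)^k := by positivity
              nlinarith
          _ = (1/2)^(k+1) * ‖w'‖ := by ring
    have hgeom : Summable (fun k : ℕ => (1/2:ℝ)^k) :=
      summable_geometric_of_lt_one (by norm_num) (by norm_num)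
    have hsum : ∀ (z : Obj) (v : E.carrier z), Summable (fun k => (D.pow k).toFun z v) := by
      intro z v
      refine Summable.of_norm ?_
      exact Summable.of_nonneg_of_le (fun k => norm_nonneg _) (fun k => hpowfun k z v)
        (hgeom.mul_right ‖v‖)
    have hsumadj : ∀ (z : Obj) (w' : E.carrier z),
        Summable (fun k => (D.pow k).adjFun z w') := by
      intro z w'
      refine Summable.of_norm ?_
      exact Summable.of_nonneg_of_le (fun k => norm_nonneg _) (fun k => hpowadj k z w')
        (hgeom.mul_right ‖w'‖)
    set S : HilbOp E E :=
      { toFun := fun z v => ∑' k, (D.pow k).toFun z v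
        adjFun := fun z w' => ∑' k, (D.pow k).adjFun z w'
        adjoint_prop := by
          intro y z v w'
          let φ : E.carrier z →+ Hom y z :=
            AddMonoidHom.mk' (fun u => E.inner u w') (fun a b => E.inner_add_left a b w')
          have hφc : Continuous φ := by
            refine AddMonoidHomClass.continuous_of_bound φ ‖w'‖ (fun u => ?_)
            rw [mul_comm]
            exact E.norm_inner_le u w'
          let ψ : E.carrier y →+ Hom y z :=
            AddMonoidHom.mk' (fun u => E.inner v u) (fun a b => E.inner_add_right v a b)
          have hψc : Continuous ψ := by
            refine AddMonoidHomClass.continuous_of_bound ψ ‖v‖ (fun u => ?_)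
            exact E.norm_inner_le v u
          have h1 := ((hsum z v).hasSum.map φ hφc)
          have h2 := ((hsumadj y w').hasSum.map ψ hψc)
          have h3 : (φ ∘ fun k => (D.pow k).toFun z v)
              = (ψ ∘ fun k => (D.pow k).adjFun y w') := by
            funext k
            exact (D.pow k).adjoint_prop v w'
          rw [h3] at h1
          exact h1.unique h2 }
      with hS
    have hSfun : ∀ (z : Obj) (v : E.carrier z),
        S.toFun z v = ∑' k, (D.pow k).toFun z v := fun z v => rfl
    have htel : ∀ (z : Obj) (v : E.carrier z), T.toFun z (S.toFun z v) = v := by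
      intro z v
      have hT' : T.toFun z (S.toFun z v) = S.toFun z v - D.toFun z (S.toFun z v) := by
        rw [hDfun z (S.toFun z v), sub_sub_cancel]
      let ψD : E.carrier z →+ E.carrier z :=
        AddMonoidHom.mk' (D.toFun z) (fun a b => D.toFun_add a b)
      have hψDc : Continuous ψD :=
        AddMonoidHomClass.continuous_of_bound ψD (1/2) (hDbound z)
      have h2 : HasSum (fun k => (D.pow (k+1)).toFun z v) (D.toFun z (S.toFun z v)) :=
        (hsum z v).hasSum.map ψD hψDc
      have h4 : S.toFun z v = v + ∑' k, (D.pow (k+1)).toFun z v := by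
        rw [hSfun, Summable.tsum_eq_zero_add (hsum z v)]
        rfl
      rw [hT', ← h2.tsum_eq, h4]
      abel
    refine ⟨n, w, fun i => (epsOp (S.adjFun (w i) (e i))).star, fun i => epsOp (f i), ?_⟩
    apply HilbOp.ext_of_toFun
    intro z v
    rw [HilbOp.sum_toFun]
    have hterm : ∀ i, ((epsOp (f i)).comp ((epsOp (S.adjFun (w i) (e i))).star)).toFun z v
        = E.smulA (f i) (E.inner (e i) (S.toFun z v)) := by
      intro i
      show E.smulA (f i) (E.inner (S.adjFun (w i) (e i)) v) = _
      congr 1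
      exact (S.adjoint_prop' (e i) v).symm
    rw [Finset.sum_congr rfl (fun i _ => hterm i), ← hTfun z (S.toFun z v), htel z v]
    rfl
  · -- converse: unital + fgp implies compact identity
    intro hu hfgp ε hε
    obtain ⟨n, x, U, V, hid⟩ := hfgp
    have hunit : ∀ i, ∃ u : Hom (x i) (x i),
        (∀ {y : Obj} (a : Hom y (x i)), u ⊛ a = a) ∧
        (∀ {y : Obj} (b : Hom (x i) y), b ⊛ u = b) := fun i => hu (x i)
    choose uu hul hur using hunit
    refine ⟨n, x, fun i => (V i).toFun (x i) (uu i),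
      fun i => (U i).adjFun (x i) (uu i), ?_⟩
    intro z v
    have hkey : (HilbOp.id E).toFun z v
        = ∑ i, E.smulA ((V i).toFun (x i) (uu i))
            (E.inner ((U i).adjFun (x i) (uu i)) v) := by
      have h1 : (HilbOp.id E).toFun z v = (∑ i, (V i).comp (U i)).toFun z v := by
        rw [hid]
      rw [h1, HilbOp.sum_toFun]
      refine Finset.sum_congr rfl (fun i _ => ?_)
      -- (V i).toFun z ((U i).toFun z v) = smulA (V i u) (inner (U i * u) v)
      have hrep : (U i).toFun z v
          = (repMod Hom (x i)).smulA (uu i)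
              ((repMod Hom (x i)).inner (uu i) ((U i).toFun z v)) := by
        show (U i).toFun z v = (uu i) ⊛ (((uu i)†) ⊛ ((U i).toFun z v))
        have hsa : (uu i)† = uu i := by
          have h2 : ((uu i)†) ⊛ (uu i) = (uu i)† := hur i ((uu i)†)
          have h3 : ((uu i)†) ⊛ (uu i) = uu i := by
            have h4 : ∀ {y : Obj} (a : Hom y (x i)), ((uu i)†) ⊛ a = a := by
              intro y a
              have h5 : (a†) ⊛ (uu i) = a† := hur i (a†)
              have h6 := congrArg CStarCategory.adj h5
              rwa [CStarCategory.adj_comp, CStarCategory.adj_adj] at h6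
            exact h4 (uu i)
          rw [← h2, h3]
        rw [hsa, hul i]
        exact (hul i _).symm
      calc ((V i).comp (U i)).toFun z v
          = (V i).toFun z ((U i).toFun z v) := rfl
        _ = (V i).toFun z ((repMod Hom (x i)).smulA (uu i)
              ((repMod Hom (x i)).inner (uu i) ((U i).toFun z v))) := by rw [← hrep]
        _ = E.smulA ((V i).toFun (x i) (uu i))
              ((repMod Hom (x i)).inner (uu i) ((U i).toFun z v)) := (V i).map_smulA _ _
        _ = E.smulA ((V i).toFun (x i) (uu i))
              (E.inner ((U i).adjFun (x i) (uu i)) v) := by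
            rw [(U i).adjoint_prop' (uu i) v]
    rw [← hkey, sub_self, norm_zero]
    exact mul_nonneg hε.le (norm_nonneg v)
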